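/- Let A=(S,R) be a finite argumentation network and h an assignment with t ⊨_h φ for all φ∈Δ_A. Then for every x∈S: h(x)=(⊤,⊤) if and only if h(y)=(⊥,⊥) for every y with (y,x)∈R. -/
import Mathlib


/-- The three Caminada labels. -/
inductive Label where
  | in_ : Label
  | out : Label
  | und : Label
deriving DecidableEq

/-- Propositional intuitionistic formulas over atoms `α`, with the
distinguished constant `nconst` (the paper's `n`). -/
inductive Form (α : Type) where
  | atom : α → Form α
  | nconst : Form α
  | top : Form α
  | bot : Form α
  | and : Form α → Form α → Form α
  | or : Form α → Form α → Form α
  | imp : Form α → Form α → Form α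
  | neg : Form α → Form α

/-- Forcing in the two-world Kripke model: world `false` is `t`, world `true`
is `s`, with `t < s` (i.e. the Bool order). `h` assigns to each atom its pair
of truth values (at `t`, at `s`). The constant `n` has value `(⊥,⊤)`. -/
def force {α : Type} (h : α → Bool × Bool) : Bool → Form α → Prop
  | w, .atom x => (if w then (h x).2 else (h x).1) = true
  | w, .nconst => w = true
  | _, .top => True
  | _, .bot => False
  | w, .and A B => force h w A ∧ force h w B
  | w, .or A B => force h w A ∨ force h w B
  | w, .imp A B => ∀ v : Bool, w ≤ v → force h v A → force h v B
  | w, .neg A => ∀ v : Bool, w ≤ v → ¬ force h v A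

/-- An assignment is legitimate when no atom gets the forbidden value `(⊤,⊥)`. -/
def Persistent {α : Type} (h : α → Bool × Bool) : Prop :=
  ∀ x, (h x).1 = true → (h x).2 = true

def bigAnd {α : Type} : List (Form α) → Form α
  | [] => .top
  | f :: fs => .and f (bigAnd fs)

def bigOr {α : Type} : List (Form α) → Form α
  | [] => .bot
  | f :: fs => .or f (bigOr fs)

/-- The list of attackers of `x` in the network `(α, R)`. -/
noncomputable def attackers {α : Type} [Fintype α] (R : α → α → Prop) [DecidableRel R] (x : α) : List α :=
  (Finset.univ.filter (fun y => R y x)).toList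

/-- (a1)  `x → (n ∨ ⋀_{yRx} ¬y)` -/
noncomputable def fa1 {α : Type} [Fintype α] (R : α → α → Prop) [DecidableRel R] (x : α) : Form α :=
  .imp (.atom x) (.or .nconst (bigAnd ((attackers R x).map (fun y => .neg (.atom y)))))

/-- (a2)  `(⋀_{yRx} ¬y) → (n ∨ x)` -/
noncomputable def fa2 {α : Type} [Fintype α] (R : α → α → Prop) [DecidableRel R] (x : α) : Form α :=
  .imp (bigAnd ((attackers R x).map (fun y => .neg (.atom y)))) (.or .nconst (.atom x))

/-- (b1)  `¬x → (n ∨ ⋁_{yRx} y)` -/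
noncomputable def fb1 {α : Type} [Fintype α] (R : α → α → Prop) [DecidableRel R] (x : α) : Form α :=
  .imp (.neg (.atom x)) (.or .nconst (bigOr ((attackers R x).map (fun y => .atom y))))

/-- (b2)  `(⋁_{yRx} y) → (¬x ∨ n)` -/
noncomputable def fb2 {α : Type} [Fintype α] (R : α → α → Prop) [DecidableRel R] (x : α) : Form α :=
  .imp (bigOr ((attackers R x).map (fun y => .atom y))) (.or (.neg (.atom x)) .nconst)

/-- `h` is a model of the theory `Δ_A`: every formula of `Δ_A` holds at `t`. -/
def ModelsDelta {α : Type} [Fintype α] (h : α → Bool × Bool)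
    (R : α → α → Prop) [DecidableRel R] : Prop :=
  ∀ x, force h false (fa1 R x) ∧ force h false (fa2 R x) ∧
    force h false (fb1 R x) ∧ force h false (fb2 R x)

/-- Caminada labelling / complete extension of the network `(α, R)`. -/
def IsCompleteExt {α : Type} (R : α → α → Prop) (l : α → Label) : Prop :=
  (∀ x, l x = .in_ ↔ ∀ y, R y x → l y = .out) ∧
  (∀ x, l x = .out ↔ ∃ y, R y x ∧ l y = .in_) ∧
  (∀ x, l x = .und ↔ ((∀ y, R y x → l y ≠ .in_) ∧ ∃ y, R y x ∧ l y = .und))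

/-- The labelling `λ_h` induced by an assignment `h`. -/
def lamOf {α : Type} (h : α → Bool × Bool) (x : α) : Label :=
  if h x = (true, true) then .in_ else if h x = (false, false) then .out else .und

/-- The assignment `h_λ` induced by a labelling `λ`. -/
def assignOf {α : Type} (l : α → Label) (x : α) : Bool × Bool :=
  match l x with
  | .in_ => (true, true)
  | .out => (false, false)
  | .und => (false, true)

lemma mem_attackers {α : Type} [Fintype α] (R : α → α → Prop) [DecidableRel R]
    (y x : α) : y ∈ attackers R x ↔ R y x := by
  simp [attackers]

lemma force_bigAnd {α : Type} (h : α → Bool × Bool) (w : Bool) (L : List (Form α)) :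
    force h w (bigAnd L) ↔ ∀ f ∈ L, force h w f := by
  induction L with
  | nil => simp [bigAnd, force]
  | cons a l ih => simp [bigAnd, force, ih]

/-- In any model `h` of `Δ_A`: `h(x) = (⊤,⊤)` iff every attacker `y` of `x`
has `h(y) = (⊥,⊥)`. -/
theorem stmt3 {α : Type} [Fintype α] [Nonempty α] (R : α → α → Prop) [DecidableRel R]
    (h : α → Bool × Bool) (hp : Persistent h) (hm : ModelsDelta h R) :
    ∀ x, h x = (true, true) ↔ ∀ y, R y x → h y = (false, false) := by
  intro x
  obtain ⟨ha1, ha2, _, _⟩ := hm x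
  constructor
  · intro hx y hyx
    have hmem : y ∈ attackers R x := mem_attackers R y x |>.2 hyx
    have hfx : force h false (Form.atom x) := by simp [force, hx]
    have := ha1 false (le_refl _) hfx
    rcases this with hn | hand
    · simp [force] at hn
    · have hneg := (force_bigAnd h false _).1 hand (Form.neg (Form.atom y))
        (List.mem_map.2 ⟨y, hmem, rfl⟩)
      have h2 : (h y).2 = false := by
        have := hneg true (by simp)
        simp [force] at this
        exact this
      have h1 : (h y).1 = false := by
        by_contra hc
        have : (h y).1 = true := by simpa using hc
        have := hp y this
        simp [h2] at this
      exact Prod.ext h1 h2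
  · intro hall
    have hand : force h false (bigAnd ((attackers R x).map (fun y => Form.neg (Form.atom y)))) := by
      apply (force_bigAnd h false _).2
      intro f hf
      rcases List.mem_map.1 hf with ⟨y, hy, rfl⟩
      have hyx : R y x := (mem_attackers R y x).1 hy
      intro v _ hv
      have := hall y hyx
      cases v <;> simp [force, this] at hv
    have := ha2 false (le_refl _) hand
    rcases this with hn | hx
    · simp [force] at hn
    · simp [force] at hx
      have := hp x hx
      exact Prod.ext hx this
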